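/- With G as above, the minimum strings satisfy the recurrence: for every node u, min_u = c · min_v where (v, u) is an edge labeled c chosen so that the pair (c, min_v) is lexicographically smallest among all incoming edges of u; in particular, min_u(0) equals the smallest label among incoming edges of u. -/
import Mathlib


open scoped Classical

/-- Length of the longest common prefix of two infinite strings, valued in `ℕ∞`. -/
noncomputable def lcp {A : Type*} (α β : ℕ → A) : ℕ∞ :=
  ⨆ k : {k : ℕ // ∀ i < k, α i = β i}, (k : ℕ∞)

/-- Strict lexicographic order on infinite strings. -/
def LexLt {A : Type*} [LinearOrder A] (α β : ℕ → A) : Prop :=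
  ∃ i, (∀ j < i, α j = β j) ∧ α i < β i

/-- Non-strict lexicographic order on infinite strings. -/
def LexLe {A : Type*} [LinearOrder A] (α β : ℕ → A) : Prop :=
  LexLt α β ∨ α = β

/-- Prepend a character to an infinite string. -/
def consStr {A : Type*} (c : A) (α : ℕ → A) : ℕ → A :=
  fun n => Nat.casesOn n c α

/-- `α` can be read from `u` following edges of the labeled graph `edge` backward. -/
def ReadableBackward {V A : Type*} (edge : V → V → A → Prop) (u : V) (α : ℕ → A) : Prop :=
  ∃ v : ℕ → V, v 0 = u ∧ ∀ k, edge (v (k + 1)) (v k) (α k)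

/-- `α` is the lexicographically smallest infinite string readable backward from `u`. -/
def IsMinStr {V A : Type*} [LinearOrder A] (edge : V → V → A → Prop) (u : V) (α : ℕ → A) : Prop :=
  ReadableBackward edge u α ∧ ∀ β, ReadableBackward edge u β → LexLe α β

/-- `α` is the lexicographically largest infinite string readable backward from `u`. -/
def IsMaxStr {V A : Type*} [LinearOrder A] (edge : V → V → A → Prop) (u : V) (α : ℕ → A) : Prop :=
  ReadableBackward edge u α ∧ ∀ β, ReadableBackward edge u β → LexLe β α

/-- A finite string occurs as the label of a (forward) walk in the graph. -/
def Occurs {V A : Type*} (edge : V → V → A → Prop) (s : List A) : Prop :=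
  ∃ v : ℕ → V, ∀ k, (h : k < s.length) → edge (v k) (v (k + 1)) (s.get ⟨k, h⟩)

lemma lexle_antisymm {A : Type*} [LinearOrder A] {α β : ℕ → A}
    (h1 : LexLe α β) (h2 : LexLe β α) : α = β := by
  rcases h1 with ⟨i, hj, hi⟩ | h; swap; · exact h
  rcases h2 with ⟨i', hj', hi'⟩ | h; swap; · exact h.symm
  rcases lt_trichotomy i i' with h | h | h
  · exact absurd ((hj' i h) ▸ hi) (lt_irrefl _)
  · subst h; exact absurd (hi.trans hi') (lt_irrefl _)
  · exact absurd ((hj i' h) ▸ hi') (lt_irrefl _)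

lemma lexle_cons_tail {A : Type*} [LinearOrder A] {c : A} {α β : ℕ → A}
    (h : LexLe (consStr c α) (consStr c β)) : LexLe α β := by
  rcases h with ⟨i, hj, hi⟩ | h
  · cases i with
    | zero => exact absurd hi (lt_irrefl _)
    | succ i => exact Or.inl ⟨i, fun j hji => hj (j + 1) (by omega), hi⟩
  · exact Or.inr (funext fun n => congrFun h (n + 1))

lemma lexle_cons_head {A : Type*} [LinearOrder A] {c c' : A} {α β : ℕ → A}
    (h : LexLe (consStr c α) (consStr c' β)) : c ≤ c' := by
  rcases h with ⟨i, hj, hi⟩ | h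
  · cases i with
    | zero => exact le_of_lt hi
    | succ i => exact le_of_eq (hj 0 (by omega))
  · exact le_of_eq (congrFun h 0)

/-- the minimum strings satisfy the recurrence min_u = c · min_v where
(c, min_v) is lexicographically smallest over incoming edges; in particular min_u(0) is
the smallest incoming label. -/
theorem min_string_recurrence {V A : Type*} [Fintype V] [Fintype A] [Nonempty A]
    [LinearOrder A] (edge : V → V → A → Prop) (hin : ∀ u : V, ∃ v c, edge v u c)
    (m : V → (ℕ → A)) (hm : ∀ u, IsMinStr edge u (m u)) (u : V) :
    ∃ v c, edge v u c ∧ m u = consStr c (m v) ∧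
      (∀ v' c', edge v' u c' → LexLe (consStr c (m v)) (consStr c' (m v'))) ∧
      m u 0 = c ∧ (∀ v' c', edge v' u c' → c ≤ c') := by
  obtain ⟨⟨w, hw0, hwe⟩, hmin⟩ := hm u
  have hread : ∀ (v' : V) (c' : A), edge v' u c' →
      ReadableBackward edge u (consStr c' (m v')) := by
    intro v' c' he
    obtain ⟨w', hw'0, hw'e⟩ := (hm v').1
    refine ⟨fun n => Nat.casesOn n u w', rfl, fun k => ?_⟩
    cases k with
    | zero => simpa [consStr, hw'0] using he
    | succ k => exact hw'e k
  have hedge : edge (w 1) u (m u 0) := hw0 ▸ hwe 0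
  refine ⟨w 1, m u 0, hedge, ?_, ?_, rfl, ?_⟩
  case _ =>
    have htail : ReadableBackward edge (w 1) (fun n => m u (n + 1)) :=
      ⟨fun k => w (k + 1), rfl, fun k => hwe (k + 1)⟩
    have hcons : m u = consStr (m u 0) (fun n => m u (n + 1)) := by
      funext n; cases n <;> rfl
    have h1 : LexLe (m (w 1)) (fun n => m u (n + 1)) := (hm (w 1)).2 _ htail
    have h2 : LexLe (m u) (consStr (m u 0) (m (w 1))) :=
      hmin _ (hread _ _ hedge)
    rw [hcons] at h2
    have h3 := lexle_cons_tail h2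
    rw [hcons, lexle_antisymm h3 h1]; rfl
  case _ =>
    intro v' c' he
    have h2 : LexLe (m u) (consStr c' (m v')) := hmin _ (hread _ _ he)
    have hcons : m u = consStr (m u 0) (fun n => m u (n + 1)) := by
      funext n; cases n <;> rfl
    -- need LexLe (consStr (m u 0) (m (w 1))) ...
    -- since m u = consStr (m u 0) (m (w 1)) by previous work; redo:
    have htail : ReadableBackward edge (w 1) (fun n => m u (n + 1)) :=
      ⟨fun k => w (k + 1), rfl, fun k => hwe (k + 1)⟩
    have h1 : LexLe (m (w 1)) (fun n => m u (n + 1)) := (hm (w 1)).2 _ htail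
    have h2' : LexLe (m u) (consStr (m u 0) (m (w 1))) :=
      hmin _ (hread _ _ hedge)
    rw [hcons] at h2'
    have heq : m u = consStr (m u 0) (m (w 1)) := by
      rw [hcons, lexle_antisymm (lexle_cons_tail h2') h1]; rfl
    rw [← heq]; exact h2
  case _ =>
    intro v' c' he
    have h2 : LexLe (m u) (consStr c' (m v')) := hmin _ (hread _ _ he)
    have hcons : m u = consStr (m u 0) (fun n => m u (n + 1)) := by
      funext n; cases n <;> rfl
    rw [hcons] at h2
    exact lexle_cons_head h2
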